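/- arXiv:1809.05933 — 3 statements merged into one kernel-verified Lean document; each statement's English description precedes it below -/
import Mathlib

section
/- Let γ > 0 and let X^τ and X_γ^τ be the perceptions generated from the same initial value X⁰ and the same savings sequence S̄¹, S̄², … by the smoothing rule, where X^τ uses the raw savings S̄^τ (Model I) and X_γ^τ uses the thresholded savings S̄_γ^τ defined by S̄_γ^τ = 0 if 0 ≤ S̄^τ < γ and S̄_γ^τ = S̄^τ otherwise (Model III). Then for every τ ≥ 0, |X_γ^τ − X^τ| ≤ γ(1 − (1−w)^τ) ≤ γ: the bounded-rationality threshold perturbs the perception by at most γ. -/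
/-- the bounded-rationality threshold γ of Model III perturbs the
smoothed perception by at most γ(1 − (1−w)^τ) ≤ γ relative to Model I. -/
theorem threshold_perturbation_bound (w γ : ℝ) (hw0 : 0 < w) (hw1 : w < 1) (hγ : 0 < γ)
    (X Xγ S Sγ : ℕ → ℝ) (h0 : Xγ 0 = X 0)
    (hSγ : ∀ τ : ℕ, Sγ τ = if 0 ≤ S τ ∧ S τ < γ then 0 else S τ)
    (hX : ∀ τ : ℕ, X (τ + 1) = (1 - w) * X τ + w * S (τ + 1))
    (hXγ : ∀ τ : ℕ, Xγ (τ + 1) = (1 - w) * Xγ τ + w * Sγ (τ + 1)) :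
    ∀ τ : ℕ, |Xγ τ - X τ| ≤ γ * (1 - (1 - w) ^ τ) ∧ γ * (1 - (1 - w) ^ τ) ≤ γ := by
  have hw0' : (0:ℝ) ≤ 1 - w := by linarith
  have hSb : ∀ τ : ℕ, |Sγ τ - S τ| ≤ γ := by
    intro τ
    rw [hSγ τ]
    split
    · next h => rw [abs_sub_comm, abs_of_nonneg (by linarith [h.1])]; linarith [h.2]
    · simp [hγ.le]
  intro τ
  induction τ with
  | zero => simp [h0, hγ.le]
  | succ n ih =>
    constructor
    · have : Xγ (n+1) - X (n+1) = (1-w) * (Xγ n - X n) + w * (Sγ (n+1) - S (n+1)) := by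
        rw [hX n, hXγ n]; ring
      rw [this]
      calc |(1-w) * (Xγ n - X n) + w * (Sγ (n+1) - S (n+1))|
          ≤ |(1-w) * (Xγ n - X n)| + |w * (Sγ (n+1) - S (n+1))| := abs_add_le _ _
        _ = (1-w) * |Xγ n - X n| + w * |Sγ (n+1) - S (n+1)| := by
            rw [abs_mul, abs_mul, abs_of_nonneg hw0', abs_of_nonneg hw0.le]
        _ ≤ (1-w) * (γ * (1 - (1-w)^n)) + w * γ := by
            gcongr
            exacts [ih.1, hSb (n+1)]
        _ = γ * (1 - (1-w)^(n+1)) := by ring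
    · have : (0:ℝ) ≤ (1-w)^(n+1) := pow_nonneg hw0' _
      nlinarith
end

section
/- Let t₀ < t_f, let P be a nonempty finite set, let g_p ∈ L¹[t₀,t_f] for each p ∈ P, and let Q > 0. Then there exists η ∈ ℝ such that ∑_{p∈P} ∫_{t₀}^{t_f} max(g_p(t) + η, 0) dt = Q; that is, the nonlinear equation for the dual variable in Step 2 of the day-to-day algorithm always has a solution. -/
open MeasureTheory

/-- the dual equation ∑_p ∫_{t₀}^{t_f} [g_p(t) + η]_+ dt = Q of Step 2
of the day-to-day algorithm always has a solution η when Q > 0. -/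
theorem dual_equation_solvable {P : Type*} [Fintype P] [Nonempty P]
    (t₀ t_f : ℝ) (ht : t₀ < t_f) (g : P → ℝ → ℝ)
    (hg : ∀ p, IntegrableOn (g p) (Set.Icc t₀ t_f)) (Q : ℝ) (hQ : 0 < Q) :
    ∃ η : ℝ, ∑ p, ∫ t in Set.Icc t₀ t_f, max (g p t + η) 0 = Q := by
  set μ : Measure ℝ := volume.restrict (Set.Icc t₀ t_f) with hμ
  have hμuniv : (μ Set.univ).toReal = t_f - t₀ := by
    simp [hμ, Measure.restrict_apply, Real.volume_Icc,
      ENNReal.toReal_ofReal (sub_nonneg.2 ht.le)]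
  -- integrability of the truncated integrands
  have hint : ∀ (p : P) (η : ℝ), Integrable (fun t => max (g p t + η) 0) μ := by
    intro p η
    exact ((hg p).add (integrable_const η)).pos_part
  set F : ℝ → ℝ := fun η => ∑ p, ∫ t, max (g p t + η) 0 ∂μ with hF
  -- F is continuous (each term is 1-Lipschitz in η up to the measure of the interval)
  have hcont : Continuous F := by
    apply continuous_finset_sum
    intro p _
    have : LipschitzWith (Real.toNNReal (t_f - t₀))
        (fun η => ∫ t, max (g p t + η) 0 ∂μ) := by
      apply LipschitzWith.of_dist_le_mul
      intro x y
      rw [Real.dist_eq, Real.dist_eq,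
        ← integral_sub (hint p x) (hint p y)]
      have hb : ∀ᵐ t ∂μ, ‖max (g p t + x) 0 - max (g p t + y) 0‖ ≤ |x - y| := by
        filter_upwards with t
        have h1 : |max (g p t + x) 0 - max (g p t + y) 0| ≤ |(g p t + x) - (g p t + y)| :=
          abs_max_sub_max_le_abs _ _ _
        simpa using h1
      calc |∫ t, (max (g p t + x) 0 - max (g p t + y) 0) ∂μ|
          ≤ |x - y| * (μ Set.univ).toReal := norm_integral_le_of_norm_le_const hb
        _ = (Real.toNNReal (t_f - t₀) : ℝ) * |x - y| := by
            rw [hμuniv, Real.coe_toNNReal _ (sub_nonneg.2 ht.le)]; ring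
    exact this.continuous
  -- F tends to 0 at -∞, so some η₁ has F η₁ ≤ Q
  have htendsto : Filter.Tendsto F Filter.atBot (nhds 0) := by
    have : ∀ p : P, Filter.Tendsto (fun η => ∫ t, max (g p t + η) 0 ∂μ)
        Filter.atBot (nhds (∫ t, (0 : ℝ) ∂μ)) := by
      intro p
      apply tendsto_integral_filter_of_dominated_convergence
        (bound := fun t => max (g p t) 0)
      · filter_upwards with η
        exact (hint p η).aestronglyMeasurable
      · filter_upwards [Filter.eventually_le_atBot (0 : ℝ)] with η hη
        filter_upwards with t
        rw [Real.norm_eq_abs, abs_of_nonneg (le_max_right _ _)]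
        exact max_le_max (by linarith) le_rfl
      · exact (hg p).pos_part
      · filter_upwards with t
        have : (fun η => max (g p t + η) 0) =ᶠ[Filter.atBot] (fun _ => (0 : ℝ)) := by
          filter_upwards [Filter.eventually_le_atBot (-(g p t))] with η hη
          exact max_eq_right (by linarith)
        exact Filter.Tendsto.congr' this.symm tendsto_const_nhds
    have := tendsto_finset_sum Finset.univ (fun p _ => this p)
    simpa [hF] using this
  have h1 : ∃ η₁ : ℝ, F η₁ ≤ Q := by
    have : ∀ᶠ η in Filter.atBot, F η ≤ Q := by
      have := htendsto.eventually_le_const hQ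
      filter_upwards [this] with η h using h
    exact this.exists
  obtain ⟨η₁, hη₁⟩ := h1
  -- F is ≥ Q for large η
  obtain ⟨η₂, hη₂⟩ : ∃ η₂ : ℝ, Q ≤ F η₂ := by
    set S : ℝ := ∑ p, ∫ t, g p t ∂μ with hS
    refine ⟨max 0 ((Q - S) / (t_f - t₀)), ?_⟩
    set η₂ : ℝ := max 0 ((Q - S) / (t_f - t₀)) with hη2
    have hη₂0 : 0 ≤ η₂ := le_max_left _ _
    have hlow : ∀ p : P, ∫ t, g p t ∂μ + η₂ * (t_f - t₀) ≤ ∫ t, max (g p t + η₂) 0 ∂μ := by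
      intro p
      have hmono : ∫ t, (g p t + η₂) ∂μ ≤ ∫ t, max (g p t + η₂) 0 ∂μ :=
        integral_mono ((hg p).add (integrable_const η₂)) (hint p η₂)
          (fun t => le_max_left _ _)
      have hadd : ∫ t, (g p t + η₂) ∂μ = ∫ t, g p t ∂μ + η₂ * (t_f - t₀) := by
        rw [integral_add (hg p) (integrable_const η₂), integral_const, smul_eq_mul,
          ← hμ, measureReal_def, hμuniv, mul_comm]
      linarith
    have hsum : S + (Fintype.card P : ℝ) * (η₂ * (t_f - t₀)) ≤ F η₂ := by
      have := Finset.sum_le_sum (fun p (_ : p ∈ Finset.univ) => hlow p)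
      simpa [hF, hS, Finset.sum_add_distrib, Finset.card_univ, mul_comm] using this
    have hcard : (1 : ℝ) ≤ (Fintype.card P : ℝ) := by
      exact_mod_cast Fintype.card_pos
    have hmul : (Q - S) ≤ η₂ * (t_f - t₀) := by
      have h2 : (Q - S) / (t_f - t₀) ≤ η₂ := le_max_right _ _
      calc Q - S = ((Q - S) / (t_f - t₀)) * (t_f - t₀) :=
            (div_mul_cancel₀ _ (by linarith : t_f - t₀ ≠ 0)).symm
        _ ≤ η₂ * (t_f - t₀) := by
            apply mul_le_mul_of_nonneg_right h2 (by linarith)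
    nlinarith [mul_nonneg hη₂0 (sub_nonneg.2 ht.le)]
  -- intermediate value theorem
  have hiv := intermediate_value_uIcc (a := η₁) (b := η₂) hcont.continuousOn
  have hQmem : Q ∈ Set.uIcc (F η₁) (F η₂) := Set.mem_uIcc.2 (Or.inl ⟨hη₁, hη₂⟩)
  obtain ⟨η, _, hηQ⟩ := hiv hQmem
  exact ⟨η, by simpa [hF, hμ] using hηQ⟩
end

section
/- Let g ∈ (L²[t₀,t_f])^P and suppose for each w ∈ W there is η_w ∈ ℝ with ∑_{p : od(p)=w} ∫_{t₀}^{t_f} max(g_p(t) + η_w, 0) dt = Q_w. Define h*_p(t) = max(g_p(t) + η_{od(p)}, 0). Then h* is the minimum-norm projection of g onto Λ: for every h ∈ Λ, ∑_{p∈P} ‖h_p − g_p‖²_{L²} ≥ ∑_{p∈P} ‖h*_p − g_p‖²_{L²}, with equality only if h = h* (as elements of (L²)^P). In particular the explicit update in Step 3 of the day-to-day algorithm realizes the projection h^{τ+1} = P_Λ[h^τ − λΦ^ε(·, h^τ)]. -/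
open MeasureTheory

private theorem step3_aux {α : Type*} [MeasurableSpace α] {μ : Measure α} [IsFiniteMeasure μ]
    {P W : Type*} [Fintype P] [Fintype W] [DecidableEq W]
    (od : P → W) (Q : W → ℝ) (g : P → Lp ℝ 2 μ) (η : W → ℝ)
    (hη : ∀ w : W, ∑ p ∈ Finset.univ.filter (fun p => od p = w),
      ∫ t, max ((g p : α → ℝ) t + η w) 0 ∂μ = Q w)
    (f : P → Lp ℝ 2 μ)
    (hfcoe : ∀ p, (f p : α → ℝ) =ᵐ[μ] fun t => max ((g p : α → ℝ) t + η (od p)) 0)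
    (h : P → Lp ℝ 2 μ)
    (hpos : ∀ p, 0 ≤ᵐ[μ] (h p : α → ℝ))
    (hsum : ∀ w : W, ∑ p ∈ Finset.univ.filter (fun p => od p = w),
      ∫ t, (h p : α → ℝ) t ∂μ = Q w) :
    (∑ p, ‖f p - g p‖ ^ 2 ≤ ∑ p, ‖h p - g p‖ ^ 2) ∧
    (∑ p, ‖h p - g p‖ ^ 2 = ∑ p, ‖f p - g p‖ ^ 2 → h = f) := by
  classical
  set m : P → α → ℝ := fun p t => max ((g p : α → ℝ) t + η (od p)) 0 with hmdef
  have hfcoe' : ∀ p, (f p : α → ℝ) =ᵐ[μ] m p := hfcoe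
  have hfint : ∀ p, Integrable (m p) μ := fun p =>
    ((Lp.memLp (f p)).ae_eq (hfcoe' p)).integrable (by norm_num)
  have hhint : ∀ p, Integrable ((h p : α → ℝ)) μ :=
    fun p => (Lp.memLp (h p)).integrable (by norm_num)
  have hinner : ∀ p, (inner ℝ (h p - f p) (f p - g p) : ℝ)
      = ∫ t, ((h p : α → ℝ) t - m p t) * (m p t - (g p : α → ℝ) t) ∂μ := by
    intro p
    rw [L2.inner_def]
    refine integral_congr_ae ?_
    filter_upwards [Lp.coeFn_sub (h p) (f p), Lp.coeFn_sub (f p) (g p), hfcoe' p]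
      with t h1 h2 h3
    simp only [h1, h2, Pi.sub_apply, h3, RCLike.inner_apply, starRingEnd_apply, star_trivial]; ring
  have hprodint : ∀ p, Integrable
      (fun t => ((h p : α → ℝ) t - m p t) * (m p t - (g p : α → ℝ) t)) μ := by
    intro p
    refine (L2.integrable_inner (𝕜 := ℝ) (h p - f p) (f p - g p)).congr ?_
    filter_upwards [Lp.coeFn_sub (h p) (f p), Lp.coeFn_sub (f p) (g p), hfcoe' p]
      with t h1 h2 h3
    simp only [h1, h2, Pi.sub_apply, h3, RCLike.inner_apply, starRingEnd_apply, star_trivial]; ring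
  have hA : ∀ p, η (od p) * ((∫ t, (h p : α → ℝ) t ∂μ) - ∫ t, m p t ∂μ)
      ≤ (inner ℝ (h p - f p) (f p - g p) : ℝ) := by
    intro p
    rw [hinner p]
    have hint2 : Integrable (fun t => η (od p) * ((h p : α → ℝ) t - m p t)) μ :=
      (((hhint p).sub (hfint p)).const_mul _)
    have hmono := integral_mono_ae hint2 (hprodint p) ?_
    · rw [integral_const_mul, integral_sub (hhint p) (hfint p)] at hmono
      exact hmono
    · filter_upwards [hpos p] with t htt
      simp only [Pi.zero_apply] at htt
      by_cases hc : 0 ≤ (g p : α → ℝ) t + η (od p)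
      · have hmt : m p t = (g p : α → ℝ) t + η (od p) := max_eq_left hc
        have : ((h p : α → ℝ) t - m p t) * (m p t - (g p : α → ℝ) t)
            = η (od p) * ((h p : α → ℝ) t - m p t) := by rw [hmt]; ring
        rw [this]
      · push_neg at hc
        have hmt : m p t = 0 := max_eq_right hc.le
        rw [hmt]
        have hg : η (od p) ≤ -(g p : α → ℝ) t := by linarith
        nlinarith [mul_le_mul_of_nonneg_left hg htt]
  have hS0 : ∑ p, η (od p) * ((∫ t, (h p : α → ℝ) t ∂μ) - ∫ t, m p t ∂μ) = 0 := by
    have hfib := Finset.sum_fiberwise_eq_sum_filter Finset.univ Finset.univ od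
      (fun p => η (od p) * ((∫ t, (h p : α → ℝ) t ∂μ) - ∫ t, m p t ∂μ))
    have hrw : ∑ p, η (od p) * ((∫ t, (h p : α → ℝ) t ∂μ) - ∫ t, m p t ∂μ)
        = ∑ w : W, ∑ p ∈ Finset.univ.filter (fun p => od p = w),
            η (od p) * ((∫ t, (h p : α → ℝ) t ∂μ) - ∫ t, m p t ∂μ) := by
      rw [hfib]; simp
    rw [hrw]
    refine Finset.sum_eq_zero fun w _ => ?_
    have hcongr : ∑ p ∈ Finset.univ.filter (fun p => od p = w),
        η (od p) * ((∫ t, (h p : α → ℝ) t ∂μ) - ∫ t, m p t ∂μ)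
        = η w * ∑ p ∈ Finset.univ.filter (fun p => od p = w),
            ((∫ t, (h p : α → ℝ) t ∂μ) - ∫ t, m p t ∂μ) := by
      rw [Finset.mul_sum]
      refine Finset.sum_congr rfl fun p hp => ?_
      rw [(Finset.mem_filter.mp hp).2]
    rw [hcongr, Finset.sum_sub_distrib]
    have hm_eq : ∑ p ∈ Finset.univ.filter (fun p => od p = w), ∫ t, m p t ∂μ = Q w := by
      rw [← hη w]
      refine Finset.sum_congr rfl fun p hp => ?_
      have hpw : od p = w := (Finset.mem_filter.mp hp).2
      simp only [hmdef, hpw]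
    rw [hm_eq, hsum w, sub_self, mul_zero]
  have hSnn : 0 ≤ ∑ p, (inner ℝ (h p - f p) (f p - g p) : ℝ) := by
    calc (0:ℝ) = ∑ p, η (od p) * ((∫ t, (h p : α → ℝ) t ∂μ) - ∫ t, m p t ∂μ) := hS0.symm
    _ ≤ _ := Finset.sum_le_sum fun p _ => hA p
  have hid : ∑ p, ‖h p - g p‖ ^ 2
      = (∑ p, ‖h p - f p‖ ^ 2) + 2 * (∑ p, (inner ℝ (h p - f p) (f p - g p) : ℝ))
        + ∑ p, ‖f p - g p‖ ^ 2 := by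
    rw [Finset.mul_sum, ← Finset.sum_add_distrib, ← Finset.sum_add_distrib]
    refine Finset.sum_congr rfl fun p _ => ?_
    rw [← sub_add_sub_cancel (h p) (f p) (g p), norm_add_sq_real]
  have hnn1 : 0 ≤ ∑ p, ‖h p - f p‖ ^ 2 :=
    Finset.sum_nonneg fun p _ => sq_nonneg _
  constructor
  · rw [hid]; nlinarith
  · intro heq
    rw [hid] at heq
    have hz : ∑ p, ‖h p - f p‖ ^ 2 = 0 := by nlinarith
    have hz' : ∀ p ∈ Finset.univ, ‖h p - f p‖ ^ 2 = 0 :=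
      (Finset.sum_eq_zero_iff_of_nonneg fun p _ => sq_nonneg _).mp hz
    funext p
    have h0 : ‖h p - f p‖ = 0 := by
      have := hz' p (Finset.mem_univ p)
      nlinarith [norm_nonneg (h p - f p)]
    have h1 : h p - f p = 0 := norm_eq_zero.mp h0
    rwa [sub_eq_zero] at h1

/-- the explicit Step 3 update h*_p(t) = [g_p(t) + η_{od(p)}]₊ realizes
the minimum-norm projection of g onto Λ: h* ∈ Λ, every h ∈ Λ has distance to g
(measured by ∑_p ‖h_p − g_p‖²_{L²}) at least that of h*, and equality forces h = h*. -/
theorem step3_update_is_projection {P W : Type*} [Fintype P] [Fintype W] [DecidableEq W]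
    (t₀ t_f : ℝ) (ht : t₀ < t_f) (od : P → W) (Q : W → ℝ) (hQ : ∀ w, 0 ≤ Q w)
    (Λ : Set (P → Lp ℝ 2 (volume.restrict (Set.Icc t₀ t_f))))
    (hΛ : Λ = {h | (∀ p, 0 ≤ᵐ[volume.restrict (Set.Icc t₀ t_f)] (h p : ℝ → ℝ)) ∧
      ∀ w : W, ∑ p ∈ Finset.univ.filter (fun p => od p = w),
        ∫ t, (h p : ℝ → ℝ) t ∂(volume.restrict (Set.Icc t₀ t_f)) = Q w})
    (g : P → Lp ℝ 2 (volume.restrict (Set.Icc t₀ t_f))) (η : W → ℝ)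
    (hη : ∀ w : W, ∑ p ∈ Finset.univ.filter (fun p => od p = w),
      ∫ t, max ((g p : ℝ → ℝ) t + η w) 0 ∂(volume.restrict (Set.Icc t₀ t_f)) = Q w)
    (hm : ∀ p, MemLp (fun t => max ((g p : ℝ → ℝ) t + η (od p)) 0) 2
      (volume.restrict (Set.Icc t₀ t_f))) :
    (fun p => (hm p).toLp _) ∈ Λ ∧
    ∀ h ∈ Λ,
      (∑ p, ‖(hm p).toLp _ - g p‖ ^ 2 ≤ ∑ p, ‖h p - g p‖ ^ 2) ∧
      (∑ p, ‖h p - g p‖ ^ 2 = ∑ p, ‖(hm p).toLp _ - g p‖ ^ 2 →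
        h = fun p => (hm p).toLp _) := by
  haveI : IsFiniteMeasure (volume.restrict (Set.Icc t₀ t_f)) := by
    refine ⟨?_⟩
    rw [Measure.restrict_apply_univ]
    exact measure_Icc_lt_top
  have hfcoe : ∀ p, ((hm p).toLp _ : ℝ → ℝ) =ᵐ[volume.restrict (Set.Icc t₀ t_f)]
      fun t => max ((g p : ℝ → ℝ) t + η (od p)) 0 := fun p => (hm p).coeFn_toLp
  constructor
  · rw [hΛ]
    refine ⟨fun p => ?_, fun w => ?_⟩
    · filter_upwards [hfcoe p] with t htt
      simp only [Pi.zero_apply]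
      rw [htt]; exact le_max_right _ _
    · rw [← hη w]
      refine Finset.sum_congr rfl fun p hp => ?_
      have hpw : od p = w := (Finset.mem_filter.mp hp).2
      rw [integral_congr_ae (hfcoe p)]
      simp only [hpw]
  · intro h hh
    rw [hΛ] at hh
    obtain ⟨hpos, hsum⟩ := hh
    exact step3_aux od Q g η hη _ hfcoe h hpos hsum
end
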